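/- Let x ∈ ℝ⁴ with x·x < 0 (so x⃗ ≠ 0 and |x⁰| < |x⃗|), and let q ∈ ℝ⁴ with q·q > 0 and q⁰ > 0. Choose unit vectors e₁, e₂ ∈ ℝ³ such that {x⃗/|x⃗|, e₁, e₂} is orthonormal, and for φ ∈ [0,2π] set n̂(φ) = (x⁰/|x⃗|)(x⃗/|x⃗|) + (1−(x⁰/|x⃗|)²)^{1/2}(cos φ · e₁ + sin φ · e₂) ∈ S². Then q⁰ − q⃗·n̂(φ) > 0 for all φ, and ∫₀^{2π} (q⁰ − q⃗·n̂(φ))^{-1} dφ = 2π |x⃗| ((q·x)² − (q·q)(x·x))^{-1/2}. -/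

import Mathlib

/-!
Statement 11: the azimuthal light-cone integral
`∫₀^{2π} (q⁰ − q⃗·n̂(φ))^{-1} dφ = 2π|x⃗| ((q·x)² − (q·q)(x·x))^{-1/2}`
for spacelike `x` and timelike future-pointing `q`, with
`n̂(φ) = (x⁰/|x⃗|)(x⃗/|x⃗|) + (1−(x⁰/|x⃗|)²)^{1/2}(cos φ e₁ + sin φ e₂)`.
-/

open Real MeasureTheory
open scoped InnerProductSpace

noncomputable section

abbrev V3 := EuclideanSpace ℝ (Fin 3)

/-- The unit vector `n̂(φ)` on the circle of null directions associated with `x`. -/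
def nhat (x0 : ℝ) (xv e1 e2 : V3) (φ : ℝ) : V3 :=
  (x0 / ‖xv‖ ^ 2) • xv +
    Real.sqrt (1 - (x0 / ‖xv‖) ^ 2) • (Real.cos φ • e1 + Real.sin φ • e2)

/-- Positivity of the Poisson-type denominator. -/
lemma poisson_pos (a b c φ : ℝ) (ha : 0 < a) (habc : b ^ 2 + c ^ 2 < a ^ 2) :
    0 < a - b * Real.cos φ - c * Real.sin φ := by
  nlinarith [sq_nonneg (b * Real.sin φ - c * Real.cos φ), Real.sin_sq_add_cos_sq φ,
    sq_nonneg (a + b * Real.cos φ + c * Real.sin φ), sq_nonneg (b * Real.cos φ + c * Real.sin φ)]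

/-- The Poisson-type integral `∫₀^{2π} (a - b cos φ - c sin φ)⁻¹ dφ = 2π/√(a²-b²-c²)`. -/
lemma poisson_integral (a b c : ℝ) (ha : 0 < a) (habc : b ^ 2 + c ^ 2 < a ^ 2) :
    ∫ φ in (0 : ℝ)..(2 * π), (a - b * Real.cos φ - c * Real.sin φ)⁻¹ =
      2 * π / Real.sqrt (a ^ 2 - b ^ 2 - c ^ 2) := by
  set c0 := Real.sqrt (a ^ 2 - b ^ 2 - c ^ 2) with hc0def
  have hc0pos : 0 < c0 := Real.sqrt_pos.mpr (by linarith)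
  have hc0sq : c0 ^ 2 = a ^ 2 - b ^ 2 - c ^ 2 := Real.sq_sqrt (by linarith)
  set G : ℝ → ℝ := fun φ =>
    (φ + 2 * Real.arctan ((b * Real.sin φ - c * Real.cos φ) /
      (c0 + a - b * Real.cos φ - c * Real.sin φ))) / c0 with hGdef
  have hD : ∀ φ : ℝ, 0 < a - b * Real.cos φ - c * Real.sin φ := fun φ => poisson_pos a b c φ ha habc
  have hderiv : ∀ φ : ℝ, HasDerivAt G (a - b * Real.cos φ - c * Real.sin φ)⁻¹ φ := by
    intro φ
    have hM : 0 < c0 + a - b * Real.cos φ - c * Real.sin φ := by have := hD φ; linarith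
    have hN : HasDerivAt (fun φ => b * Real.sin φ - c * Real.cos φ)
        (b * Real.cos φ + c * Real.sin φ) φ := by
      have := ((Real.hasDerivAt_sin φ).const_mul b).sub ((Real.hasDerivAt_cos φ).const_mul c)
      simpa [mul_comm, sub_neg_eq_add, Pi.sub_def] using this
    have hMd : HasDerivAt (fun φ => c0 + a - b * Real.cos φ - c * Real.sin φ)
        (b * Real.sin φ - c * Real.cos φ) φ := by
      have := (((hasDerivAt_const φ (c0 + a)).sub ((Real.hasDerivAt_cos φ).const_mul b)).sub
        ((Real.hasDerivAt_sin φ).const_mul c))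
      convert this using 1
      · rfl
      · rfl
      · rfl
      · ring
    have hq := (hN.div hMd hM.ne').arctan
    have hfull := ((hasDerivAt_id φ).add (hq.const_mul 2)).div_const c0
    convert hfull using 1
    case e'_4 => rfl
    case e'_5 => rfl
    case e'_8 => rfl
    simp only [Pi.div_apply]
    set s := Real.sin φ; set co := Real.cos φ
    have hsc : s ^ 2 + co ^ 2 = 1 := Real.sin_sq_add_cos_sq φ
    set D := a - b * co - c * s with hDdef
    have hDpos : 0 < D := hD φ
    set M := c0 + a - b * co - c * s with hMdef
    have hMeq : M = c0 + D := by rw [hMdef, hDdef]; ring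
    have hMpos : 0 < M := hM
    have key1 : M ^ 2 + (b * s - c * co) ^ 2 = 2 * D * (a + c0) := by
      rw [hMeq, hDdef]; nlinarith [hsc, hc0sq]
    have key2 : (b * co + c * s) * M - (b * s - c * co) * (b * s - c * co) =
        (a + c0) * (c0 - D) := by
      rw [hMeq, hDdef]; nlinarith [hsc, hc0sq]
    have h1pq : 1 + ((b * s - c * co) / M) ^ 2 = 2 * D * (a + c0) / M ^ 2 := by
      field_simp
      linarith [key1]
    rw [h1pq, key2]
    have hac0 : (0:ℝ) < a + c0 := by linarith
    field_simp [hDpos.ne', hMpos.ne', hc0pos.ne', hac0.ne']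
    ring
  have hcont : Continuous fun φ : ℝ => (a - b * Real.cos φ - c * Real.sin φ)⁻¹ := by
    apply Continuous.inv₀
    · continuity
    · intro φ; exact (hD φ).ne'
  have := intervalIntegral.integral_eq_sub_of_hasDerivAt
    (fun φ _ => hderiv φ) (hcont.intervalIntegrable 0 (2 * π))
  rw [this, hGdef]
  simp [Real.sin_two_pi, Real.cos_two_pi]
  ring

/-- Parseval for the orthonormal triple `{x⃗/|x⃗|, e₁, e₂}` in ℝ³. -/
lemma parseval_three (qv xv e1 e2 : V3) (hX : 0 < ‖xv‖)
    (he1 : ‖e1‖ = 1) (he2 : ‖e2‖ = 1) (h12 : ⟪e1, e2⟫_ℝ = 0)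
    (hx1 : ⟪xv, e1⟫_ℝ = 0) (hx2 : ⟪xv, e2⟫_ℝ = 0) :
    ‖qv‖ ^ 2 = (⟪qv, xv⟫_ℝ / ‖xv‖) ^ 2 + ⟪qv, e1⟫_ℝ ^ 2 + ⟪qv, e2⟫_ℝ ^ 2 := by
  have hon : Orthonormal ℝ ![‖xv‖⁻¹ • xv, e1, e2] := by
    rw [orthonormal_iff_ite]
    intro i j
    have hxx : ⟪xv, xv⟫_ℝ = ‖xv‖ ^ 2 := real_inner_self_eq_norm_sq xv
    have he11 : ⟪e1, e1⟫_ℝ = 1 := by rw [real_inner_self_eq_norm_sq, he1]; norm_num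
    have he22 : ⟪e2, e2⟫_ℝ = 1 := by rw [real_inner_self_eq_norm_sq, he2]; norm_num
    have hx1' : ⟪e1, xv⟫_ℝ = 0 := by rw [real_inner_comm]; exact hx1
    have hx2' : ⟪e2, xv⟫_ℝ = 0 := by rw [real_inner_comm]; exact hx2
    have h21 : ⟪e2, e1⟫_ℝ = 0 := by rw [real_inner_comm]; exact h12
    fin_cases i <;> fin_cases j <;>
      simp only [Fin.zero_eta, Fin.mk_one, show (⟨2, by norm_num⟩ : Fin 3) = 2 from rfl,
        Matrix.cons_val_zero, Matrix.cons_val_one, Matrix.head_cons,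
        Matrix.cons_val_two, Matrix.tail_cons, real_inner_smul_left, real_inner_smul_right,
        hxx, he11, he22, hx1, hx2, h12, hx1', hx2', h21, mul_zero, mul_one,
        Fin.reduceEq, reduceIte] <;>
      field_simp <;> ring
  have hcard : Fintype.card (Fin 3) = Module.finrank ℝ V3 := by simp
  let B := (basisOfOrthonormalOfCardEqFinrank hon hcard).toOrthonormalBasis
    (by rw [coe_basisOfOrthonormalOfCardEqFinrank]; exact hon)
  have hB : ∀ i, B i = ![‖xv‖⁻¹ • xv, e1, e2] i := by
    intro i
    have : ⇑B = ![‖xv‖⁻¹ • xv, e1, e2] := by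
      rw [Module.Basis.coe_toOrthonormalBasis, coe_basisOfOrthonormalOfCardEqFinrank]
    rw [this]
  have h := B.sum_inner_mul_inner qv qv
  rw [Fin.sum_univ_three, hB 0, hB 1, hB 2] at h
  simp only [Matrix.cons_val_zero, Matrix.cons_val_one, Matrix.head_cons,
    Matrix.cons_val_two, Matrix.tail_cons] at h
  rw [real_inner_self_eq_norm_sq] at h
  rw [← h, real_inner_smul_right, real_inner_smul_left, real_inner_comm xv qv,
    real_inner_comm e1 qv, real_inner_comm e2 qv]
  field_simp

lemma ineq_aux (x0 X Q q0 p : ℝ) (hX2 : 0 < X ^ 2) (hx : x0 ^ 2 < X ^ 2)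
    (hq2 : Q ^ 2 < q0 ^ 2) (hq0 : 0 < q0) (hp2 : p ^ 2 ≤ Q ^ 2 * X ^ 2) :
    x0 * p < q0 * X ^ 2 := by
  have h0 : (0:ℝ) ≤ Q ^ 2 * X ^ 2 := by positivity
  have e1' : x0 ^ 2 * p ^ 2 ≤ x0 ^ 2 * (Q ^ 2 * X ^ 2) :=
    mul_le_mul_of_nonneg_left hp2 (sq_nonneg x0)
  have e2' : x0 ^ 2 * (Q ^ 2 * X ^ 2) ≤ X ^ 2 * (Q ^ 2 * X ^ 2) :=
    mul_le_mul_of_nonneg_right (le_of_lt hx) h0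
  have e3' : X ^ 2 * (Q ^ 2 * X ^ 2) < X ^ 2 * (q0 ^ 2 * X ^ 2) :=
    mul_lt_mul_of_pos_left (mul_lt_mul_of_pos_right hq2 hX2) hX2
  nlinarith [e1', e2', e3', mul_pos hq0 hX2]

set_option maxHeartbeats 2000000 in
theorem lightcone_azimuthal_integral (x0 : ℝ) (xv : V3) (q0 : ℝ) (qv : V3)
    (hx : x0 ^ 2 - ‖xv‖ ^ 2 < 0) (hq : 0 < q0 ^ 2 - ‖qv‖ ^ 2) (hq0 : 0 < q0)
    (e1 e2 : V3) (he1 : ‖e1‖ = 1) (he2 : ‖e2‖ = 1) (h12 : ⟪e1, e2⟫_ℝ = 0)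
    (hx1 : ⟪xv, e1⟫_ℝ = 0) (hx2 : ⟪xv, e2⟫_ℝ = 0) :
    (∀ φ ∈ Set.Icc (0 : ℝ) (2 * π), 0 < q0 - ⟪qv, nhat x0 xv e1 e2 φ⟫_ℝ) ∧
    (∫ φ in (0 : ℝ)..(2 * π), (q0 - ⟪qv, nhat x0 xv e1 e2 φ⟫_ℝ)⁻¹) =
      2 * π * ‖xv‖ *
        ((q0 * x0 - ⟪qv, xv⟫_ℝ) ^ 2 -
            (q0 ^ 2 - ‖qv‖ ^ 2) * (x0 ^ 2 - ‖xv‖ ^ 2)) ^ (-(1 : ℝ) / 2) := by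
  have hX2 : 0 < ‖xv‖ ^ 2 := by nlinarith [sq_nonneg x0]
  have hX : 0 < ‖xv‖ := by nlinarith [norm_nonneg xv]
  have hQ : ‖qv‖ < q0 := by nlinarith [norm_nonneg qv]
  set p := ⟪qv, xv⟫_ℝ with hpdef
  set q1 := ⟪qv, e1⟫_ℝ with hq1def
  set q2 := ⟪qv, e2⟫_ℝ with hq2def
  set s := Real.sqrt (1 - (x0 / ‖xv‖) ^ 2) with hsdef
  have harg : 0 ≤ 1 - (x0 / ‖xv‖) ^ 2 := by
    rw [div_pow, sub_nonneg, div_le_one hX2]; nlinarith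
  have hs2 : s ^ 2 = 1 - x0 ^ 2 / ‖xv‖ ^ 2 := by
    rw [hsdef, Real.sq_sqrt harg, div_pow]
  have hinner : ∀ φ : ℝ, ⟪qv, nhat x0 xv e1 e2 φ⟫_ℝ =
      x0 / ‖xv‖ ^ 2 * p + (s * q1) * Real.cos φ + (s * q2) * Real.sin φ := by
    intro φ
    simp only [nhat, inner_add_right, real_inner_smul_right, ← hpdef, ← hq1def, ← hq2def,
      ← hsdef]
    ring
  set A := q0 - x0 / ‖xv‖ ^ 2 * p with hAdef
  set B := s * q1 with hBdef
  set C := s * q2 with hCdef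
  have hsub : ∀ φ : ℝ, q0 - ⟪qv, nhat x0 xv e1 e2 φ⟫_ℝ =
      A - B * Real.cos φ - C * Real.sin φ := by
    intro φ; rw [hinner φ]; ring
  have hPar : ‖qv‖ ^ 2 = (p / ‖xv‖) ^ 2 + q1 ^ 2 + q2 ^ 2 :=
    parseval_three qv xv e1 e2 hX he1 he2 h12 hx1 hx2
  have hp2 : p ^ 2 ≤ ‖qv‖ ^ 2 * ‖xv‖ ^ 2 := by
    have h := abs_real_inner_le_norm qv xv
    nlinarith [abs_nonneg p, sq_abs p, norm_nonneg qv, norm_nonneg xv]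
  have hA0 : 0 < A := by
    rw [hAdef, sub_pos, div_mul_eq_mul_div, div_lt_iff₀ hX2]
    have hq2 : ‖qv‖ ^ 2 < q0 ^ 2 := by nlinarith [norm_nonneg qv]
    exact ineq_aux x0 ‖xv‖ ‖qv‖ q0 p hX2 (by linarith) hq2 hq0 hp2
  have hT : 0 < (q0 * x0 - p) ^ 2 - (q0 ^ 2 - ‖qv‖ ^ 2) * (x0 ^ 2 - ‖xv‖ ^ 2) := by
    nlinarith [sq_nonneg (q0 * x0 - p), mul_pos hq (show (0:ℝ) < ‖xv‖ ^ 2 - x0 ^ 2 by linarith)]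
  have hABC : A ^ 2 - B ^ 2 - C ^ 2 =
      ((q0 * x0 - p) ^ 2 - (q0 ^ 2 - ‖qv‖ ^ 2) * (x0 ^ 2 - ‖xv‖ ^ 2)) / ‖xv‖ ^ 2 := by
    rw [hAdef, hBdef, hCdef, hPar, mul_pow, mul_pow, hs2]
    field_simp
    ring
  have habc : B ^ 2 + C ^ 2 < A ^ 2 := by
    have h := hABC ▸ div_pos hT hX2
    linarith
  refine ⟨fun φ _ => ?_, ?_⟩
  · rw [hsub φ]; exact poisson_pos A B C φ hA0 habc
  · have hint : (∫ φ in (0 : ℝ)..(2 * π), (q0 - ⟪qv, nhat x0 xv e1 e2 φ⟫_ℝ)⁻¹) =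
        2 * π / Real.sqrt (A ^ 2 - B ^ 2 - C ^ 2) := by
      simp only [hsub]
      exact poisson_integral A B C hA0 habc
    rw [hint, hABC, Real.sqrt_div hT.le, Real.sqrt_sq hX.le]
    have hsT : 0 < Real.sqrt ((q0 * x0 - p) ^ 2 - (q0 ^ 2 - ‖qv‖ ^ 2) * (x0 ^ 2 - ‖xv‖ ^ 2)) :=
      Real.sqrt_pos.mpr hT
    rw [show (-(1 : ℝ) / 2) = -(1 / 2) by norm_num, Real.rpow_neg hT.le,
      ← Real.sqrt_eq_rpow]
    field_simp
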